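/- arXiv:1704.08086 — 5 statements merged into one kernel-verified Lean document; each statement's English description precedes it below -/
import Mathlib

section
/- In a monoidal category, let s : S ↪ I and t : T ↪ I be idempotent subunits. Then s factors through t (i.e., s = t ∘ f for some morphism f : S → T) if and only if id_S ⊗ t : S ⊗ T → S ⊗ I is an isomorphism. -/
open CategoryTheory MonoidalCategory

set_option maxHeartbeats 1000000

section Aux

variable {C : Type*} [Category C] [MonoidalCategory C]

lemma subunit_comm {S : C} (s : S ⟶ 𝟙_ C) [Mono s] :
    (s ⊗ₘ 𝟙 S) ≫ (λ_ S).hom = (𝟙 S ⊗ₘ s) ≫ (ρ_ S).hom := by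
  rw [← cancel_mono s, Category.assoc, Category.assoc,
    ← leftUnitor_naturality, ← rightUnitor_naturality,
    ← id_tensorHom, ← tensorHom_id, ← Category.assoc, ← Category.assoc,
    tensorHom_comp_tensorHom, tensorHom_comp_tensorHom]
  simp [unitors_equal]

lemma subunit_iso {S : C} (s : S ⟶ 𝟙_ C) [Mono s] (hs : IsIso (s ⊗ₘ 𝟙 S)) :
    IsIso (𝟙 S ⊗ₘ s) := by
  have h : (𝟙 S ⊗ₘ s) = (s ⊗ₘ 𝟙 S) ≫ (λ_ S).hom ≫ (ρ_ S).inv := by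
    rw [← Category.assoc, subunit_comm]; simp
  rw [h]
  infer_instance

end Aux

/-- Proposition 4: an idempotent subunit `s` factors through an idempotent subunit `t`
iff `id_S ⊗ₘ t` is an isomorphism. -/
theorem stmt1 {C : Type*} [Category C] [MonoidalCategory C]
    {S T : C} (s : S ⟶ 𝟙_ C) (t : T ⟶ 𝟙_ C) [Mono s] [Mono t]
    (hs : IsIso (s ⊗ₘ 𝟙 S)) (ht : IsIso (t ⊗ₘ 𝟙 T)) :
    (∃ f : S ⟶ T, s = f ≫ t) ↔ IsIso (𝟙 S ⊗ₘ t) := by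
  constructor
  · rintro ⟨f, rfl⟩
    have hS2 : IsIso (𝟙 S ⊗ₘ f ≫ t) := subunit_iso _ hs
    have hT2 : IsIso (𝟙 T ⊗ₘ t) := subunit_iso t ht
    have e : (𝟙 (S ⊗ T) ⊗ₘ t) ≫ (α_ S T (𝟙_ C)).hom
        = (α_ S T T).hom ≫ (𝟙 S ⊗ₘ (𝟙 T ⊗ₘ t)) := by
      rw [← id_tensorHom_id, associator_naturality]
    have e2 : (𝟙 (S ⊗ T) ⊗ₘ t)
        = (α_ S T T).hom ≫ (𝟙 S ⊗ₘ (𝟙 T ⊗ₘ t)) ≫ (α_ S T (𝟙_ C)).inv := by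
      rw [← Category.assoc, ← e, Category.assoc, Iso.hom_inv_id, Category.comp_id]
    -- `𝟙 (S ⊗ T) ⊗ₘ t` is iso
    have hST : IsIso (𝟙 (S ⊗ T) ⊗ₘ t) := by rw [e2]; infer_instance
    set g := (𝟙 S ⊗ₘ t) with hgdef
    set h := inv (𝟙 S ⊗ₘ (f ≫ t)) ≫ (𝟙 S ⊗ₘ f) with hhdef
    have hg : h ≫ g = 𝟙 (S ⊗ 𝟙_ C) := by
      rw [hhdef, hgdef, Category.assoc, ← id_tensor_comp, IsIso.inv_hom_id]
    -- key coherence-type equation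
    have key : ((g ≫ (ρ_ S).hom) ⊗ₘ 𝟙 T) = (𝟙 (S ⊗ T) ⊗ₘ t) ≫ (ρ_ (S ⊗ T)).hom := by
      rw [rightUnitor_tensor_hom, ← Category.assoc, e]
      rw [hgdef, comp_tensor_id, ← id_tensorHom]
      simp only [Category.assoc]
      calc ((𝟙 S ⊗ₘ t) ⊗ₘ 𝟙 T) ≫ ((ρ_ S).hom ⊗ₘ 𝟙 T)
          = ((𝟙 S ⊗ₘ t) ⊗ₘ 𝟙 T) ≫ (α_ S (𝟙_ C) T).hom ≫ (𝟙 S ⊗ₘ (λ_ T).hom) := by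
            congr 1
            rw [tensorHom_id, id_tensorHom, triangle]
        _ = (α_ S T T).hom ≫ (𝟙 S ⊗ₘ ((t ⊗ₘ 𝟙 T) ≫ (λ_ T).hom)) := by
            rw [id_tensor_comp, ← Category.assoc, associator_naturality, Category.assoc]
        _ = (α_ S T T).hom ≫ (𝟙 S ⊗ₘ ((𝟙 T ⊗ₘ t) ≫ (ρ_ T).hom)) := by rw [subunit_comm]
        _ = (α_ S T T).hom ≫ (𝟙 S ⊗ₘ (𝟙 T ⊗ₘ t)) ≫ (𝟙 S ⊗ₘ (ρ_ T).hom) := by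
            rw [id_tensor_comp]
      -- whisker form fixup
    -- naturality of the "insert T" map
    have natw : ∀ w : S ⊗ T ⟶ S ⊗ T,
        w ≫ (ρ_ (S ⊗ T)).inv ≫ inv (𝟙 (S ⊗ T) ⊗ₘ t)
          = (ρ_ (S ⊗ T)).inv ≫ inv (𝟙 (S ⊗ T) ⊗ₘ t) ≫ (w ⊗ₘ 𝟙 T) := by
      intro w
      have h1 : (w ⊗ₘ 𝟙 T) ≫ (𝟙 (S ⊗ T) ⊗ₘ t) = (𝟙 (S ⊗ T) ⊗ₘ t) ≫ (w ⊗ₘ 𝟙 (𝟙_ C)) := by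
        rw [tensorHom_comp_tensorHom, tensorHom_comp_tensorHom]; simp
      have h2 : inv (𝟙 (S ⊗ T) ⊗ₘ t) ≫ (w ⊗ₘ 𝟙 T)
          = (w ⊗ₘ 𝟙 (𝟙_ C)) ≫ inv (𝟙 (S ⊗ T) ⊗ₘ t) := by
        rw [IsIso.inv_comp_eq, ← Category.assoc, ← h1, Category.assoc,
          IsIso.hom_inv_id, Category.comp_id]
      rw [h2, ← Category.assoc, ← Category.assoc]
      congr 1
      rw [tensorHom_id, rightUnitor_inv_naturality]
    have hp : (g ≫ h) ≫ (g ≫ (ρ_ S).hom) = g ≫ (ρ_ S).hom := by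
      rw [Category.assoc, ← Category.assoc h g, hg, Category.id_comp]
    have he : g ≫ h = 𝟙 (S ⊗ T) := by
      calc g ≫ h
          = ((g ≫ h) ≫ (ρ_ (S ⊗ T)).inv ≫ inv (𝟙 (S ⊗ T) ⊗ₘ t))
              ≫ ((g ≫ (ρ_ S).hom) ⊗ₘ 𝟙 T) := by
            rw [key]
            simp only [Category.assoc, IsIso.inv_hom_id_assoc]
            rw [Iso.inv_hom_id, Category.comp_id]
        _ = ((ρ_ (S ⊗ T)).inv ≫ inv (𝟙 (S ⊗ T) ⊗ₘ t) ≫ ((g ≫ h) ⊗ₘ 𝟙 T))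
              ≫ ((g ≫ (ρ_ S).hom) ⊗ₘ 𝟙 T) := by rw [natw]
        _ = (ρ_ (S ⊗ T)).inv ≫ inv (𝟙 (S ⊗ T) ⊗ₘ t)
              ≫ (((g ≫ h) ≫ (g ≫ (ρ_ S).hom)) ⊗ₘ 𝟙 T) := by
            simp only [Category.assoc]
            rw [tensorHom_comp_tensorHom]; simp
        _ = (ρ_ (S ⊗ T)).inv ≫ inv (𝟙 (S ⊗ T) ⊗ₘ t) ≫ ((g ≫ (ρ_ S).hom) ⊗ₘ 𝟙 T) := by
            rw [hp]
        _ = 𝟙 (S ⊗ T) := by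
            rw [key]
            simp only [Category.assoc, IsIso.inv_hom_id_assoc, Iso.inv_hom_id]
    exact ⟨h, he, hg⟩
  · intro hiso
    refine ⟨(ρ_ S).inv ≫ inv (𝟙 S ⊗ₘ t) ≫ (s ⊗ₘ 𝟙 T) ≫ (λ_ T).hom, ?_⟩
    have l2 : (s ⊗ₘ 𝟙 T) ≫ (𝟙 (𝟙_ C) ⊗ₘ t) = (𝟙 S ⊗ₘ t) ≫ (s ⊗ₘ 𝟙 (𝟙_ C)) := by
      rw [tensorHom_comp_tensorHom, tensorHom_comp_tensorHom]; simp
    calc s = (ρ_ S).inv ≫ (ρ_ S).hom ≫ s := by simp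
      _ = (ρ_ S).inv ≫ (s ⊗ₘ 𝟙 (𝟙_ C)) ≫ (ρ_ (𝟙_ C)).hom := by
          rw [tensorHom_id, rightUnitor_naturality]
      _ = (ρ_ S).inv ≫ inv (𝟙 S ⊗ₘ t) ≫ ((𝟙 S ⊗ₘ t) ≫ (s ⊗ₘ 𝟙 (𝟙_ C))) ≫ (λ_ (𝟙_ C)).hom := by
          rw [unitors_equal]
          simp only [IsIso.inv_hom_id_assoc, Category.assoc]
      _ = (ρ_ S).inv ≫ inv (𝟙 S ⊗ₘ t) ≫ ((s ⊗ₘ 𝟙 T) ≫ (𝟙 (𝟙_ C) ⊗ₘ t)) ≫ (λ_ (𝟙_ C)).hom := by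
          rw [l2]
      _ = (ρ_ S).inv ≫ inv (𝟙 S ⊗ₘ t) ≫ (s ⊗ₘ 𝟙 T) ≫ (λ_ T).hom ≫ t := by
          simp only [id_tensorHom, Category.assoc]
          rw [← leftUnitor_naturality]
      _ = ((ρ_ S).inv ≫ inv (𝟙 S ⊗ₘ t) ≫ (s ⊗ₘ 𝟙 T) ≫ (λ_ T).hom) ≫ t := by
          simp only [Category.assoc]
end

section
/- If s, s' : S ↪ I are two idempotent subunits with the same domain S in a monoidal category, then there exists a unique morphism f : S → S with s' = s ∘ f, and this f is an isomorphism. -/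
open CategoryTheory MonoidalCategory

lemma unitor_swap_aux {C : Type*} [Category C] [MonoidalCategory C]
    {S : C} (s : S ⟶ 𝟙_ C) [Mono s] :
    (s ⊗ₘ 𝟙 S) ≫ (λ_ S).hom = (𝟙 S ⊗ₘ s) ≫ (ρ_ S).hom := by
  rw [← cancel_mono s]
  rw [Category.assoc, Category.assoc, ← leftUnitor_naturality, ← rightUnitor_naturality]
  simp only [MonoidalCategory.tensorHom_def, MonoidalCategory.whiskerLeft_id, MonoidalCategory.id_whiskerRight,
    Category.id_comp, Category.comp_id, Category.assoc, unitors_equal]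
  rw [← Category.assoc, ← whisker_exchange, Category.assoc]

lemma exchange_aux {C : Type*} [Category C] [MonoidalCategory C]
    {S : C} (s s' : S ⟶ 𝟙_ C) :
    (s' ⊗ₘ 𝟙 S) ≫ (λ_ S).hom ≫ s = (𝟙 S ⊗ₘ s) ≫ (ρ_ S).hom ≫ s' := by
  rw [← leftUnitor_naturality, ← rightUnitor_naturality]
  simp only [MonoidalCategory.tensorHom_def, MonoidalCategory.whiskerLeft_id, MonoidalCategory.id_whiskerRight,
    Category.id_comp, Category.comp_id, Category.assoc, unitors_equal]
  rw [← Category.assoc, ← whisker_exchange, Category.assoc]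

/-- Corollary 5: two idempotent subunits with the same domain differ by a unique
morphism, which is an isomorphism. -/
theorem stmt2 {C : Type*} [Category C] [MonoidalCategory C]
    {S : C} (s s' : S ⟶ 𝟙_ C) [Mono s] [Mono s']
    (hs : IsIso (s ⊗ₘ 𝟙 S)) (hs' : IsIso (s' ⊗ₘ 𝟙 S)) :
    ∃ f : S ⟶ S, s' = f ≫ s ∧ IsIso f ∧ ∀ g : S ⟶ S, s' = g ≫ s → g = f := by
  set f := (λ_ S).inv ≫ inv (s ⊗ₘ 𝟙 S) ≫ (s' ⊗ₘ 𝟙 S) ≫ (λ_ S).hom with hf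
  have key : s' = f ≫ s := by
    have h1 : (s' ⊗ₘ 𝟙 S) ≫ (λ_ S).hom ≫ s = (s ⊗ₘ 𝟙 S) ≫ (λ_ S).hom ≫ s' := by
      rw [exchange_aux s s', ← Category.assoc, ← unitor_swap_aux s, Category.assoc]
    calc s' = (λ_ S).inv ≫ inv (s ⊗ₘ 𝟙 S) ≫ (s ⊗ₘ 𝟙 S) ≫ (λ_ S).hom ≫ s' := by simp
      _ = f ≫ s := by rw [← h1, hf]; simp
  refine ⟨f, key, ?_, ?_⟩
  · rw [hf]; infer_instance
  · intro g hg
    rw [← cancel_mono s, ← hg, key]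
end

section
/- In a firm braided monoidal category, given idempotent subunits s : S ↪ I and t : T ↪ I, the composite λ_I ∘ (s ⊗ t) : S ⊗ T → I is again a monomorphism, and it is an idempotent subunit. -/
open CategoryTheory MonoidalCategory

/-- A braided monoidal category is *firm* when `s ⊗ id_T` is monic for all idempotent
subunits `s : S ↪ I` and `t : T ↪ I`. -/
def Firm (C : Type*) [Category C] [MonoidalCategory C] [BraidedCategory C] : Prop :=
  ∀ {S T : C} (s : S ⟶ 𝟙_ C) (t : T ⟶ 𝟙_ C), Mono s → Mono t →
    IsIso (s ⊗ₘ 𝟙 S) → IsIso (t ⊗ₘ 𝟙 T) → Mono (s ⊗ₘ 𝟙 T)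

/-- In a firm braided monoidal category, the product `λ_I ∘ (s ⊗ t)` of two idempotent
subunits is again a monomorphism and an idempotent subunit. -/
theorem stmt3 {C : Type*} [Category C] [MonoidalCategory C] [BraidedCategory C]
    (firm : Firm C) {S T : C} (s : S ⟶ 𝟙_ C) (t : T ⟶ 𝟙_ C) [Mono s] [Mono t]
    (hs : IsIso (s ⊗ₘ 𝟙 S)) (ht : IsIso (t ⊗ₘ 𝟙 T)) :
    Mono ((s ⊗ₘ t) ≫ (λ_ (𝟙_ C)).hom) ∧
      IsIso (((s ⊗ₘ t) ≫ (λ_ (𝟙_ C)).hom) ⊗ₘ 𝟙 (S ⊗ T)) := by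
  have hμ : ∀ X₁ X₂ Y₁ Y₂ : C, IsIso (tensorμ X₁ X₂ Y₁ Y₂) := fun X₁ X₂ Y₁ Y₂ =>
    ⟨tensorδ X₁ X₂ Y₁ Y₂, tensorμ_tensorδ X₁ X₂ Y₁ Y₂, tensorδ_tensorμ X₁ X₂ Y₁ Y₂⟩
  constructor
  · -- mono part
    have h1 : Mono (s ⊗ₘ 𝟙 T) := firm s t ‹_› ‹_› hs ht
    have h2 : (𝟙 (𝟙_ C) ⊗ₘ t) = (λ_ T).hom ≫ t ≫ (λ_ (𝟙_ C)).inv := by simp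
    have h3 : Mono (𝟙 (𝟙_ C) ⊗ₘ t) := by rw [h2]; infer_instance
    have h4 : (s ⊗ₘ t) = (s ⊗ₘ 𝟙 T) ≫ (𝟙 (𝟙_ C) ⊗ₘ t) := by
      rw [tensorHom_comp_tensorHom]; simp
    have h5 : Mono (s ⊗ₘ t) := by rw [h4]; exact mono_comp _ _
    exact mono_comp _ _
  · -- iso part
    have key : ((s ⊗ₘ t) ⊗ₘ 𝟙 (S ⊗ T)) =
        tensorμ S T S T ≫ ((s ⊗ₘ 𝟙 S) ⊗ₘ (t ⊗ₘ 𝟙 T)) ≫ tensorδ (𝟙_ C) (𝟙_ C) S T := by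
      have := tensorμ_natural (C := C) s t (𝟙 S) (𝟙 T)
      rw [← id_tensorHom_id] 
      rw [← cancel_mono (tensorμ (𝟙_ C) (𝟙_ C) S T)]
      simp only [Category.assoc, tensorδ_tensorμ, Category.comp_id, this]
    have hiso : IsIso ((s ⊗ₘ t) ⊗ₘ 𝟙 (S ⊗ T)) := by
      rw [key]
      have := hμ S T S T
      have : IsIso (tensorδ (𝟙_ C) (𝟙_ C) S T) :=
        ⟨tensorμ (𝟙_ C) (𝟙_ C) S T, tensorδ_tensorμ _ _ _ _, tensorμ_tensorδ _ _ _ _⟩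
      infer_instance
    have heq : (((s ⊗ₘ t) ≫ (λ_ (𝟙_ C)).hom) ⊗ₘ 𝟙 (S ⊗ T)) =
        ((s ⊗ₘ t) ⊗ₘ 𝟙 (S ⊗ T)) ≫ ((λ_ (𝟙_ C)).hom ⊗ₘ 𝟙 (S ⊗ T)) := by
      rw [tensorHom_comp_tensorHom]; simp
    rw [heq]
    infer_instance
end

section
/- In a firm braided monoidal category, the idempotent subunits (as subobjects of the tensor unit) form an idempotent commutative monoid under the operation sending (s : S ↪ I, t : T ↪ I) to λ_I ∘ (s ⊗ t) : S ⊗ T → I, with unit the identity id_I. -/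
open CategoryTheory MonoidalCategory

/-- `s : S ↪ I` is an idempotent subunit. -/
def IsIdemSubunit {C : Type*} [Category C] [MonoidalCategory C] {S : C}
    (s : S ⟶ 𝟙_ C) : Prop :=
  Mono s ∧ IsIso (s ⊗ₘ 𝟙 S)

/-- Two (mono)morphisms into `I` represent the same subobject of `I`. -/
def SameSub {C : Type*} [Category C] [MonoidalCategory C] {S T : C}
    (s : S ⟶ 𝟙_ C) (t : T ⟶ 𝟙_ C) : Prop :=
  (∃ f : S ⟶ T, s = f ≫ t) ∧ (∃ g : T ⟶ S, t = g ≫ s)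

/-- The product of idempotent subunits `s, t`: `λ_I ∘ (s ⊗ t) : S ⊗ T → I`. -/
def subunitMul {C : Type*} [Category C] [MonoidalCategory C] {S T : C}
    (s : S ⟶ 𝟙_ C) (t : T ⟶ 𝟙_ C) : S ⊗ T ⟶ 𝟙_ C :=
  (s ⊗ₘ t) ≫ (λ_ (𝟙_ C)).hom

section Aux

variable {C : Type*} [Category C] [MonoidalCategory C] [BraidedCategory C]

instance tensorμ_isIso (X₁ X₂ Y₁ Y₂ : C) : IsIso (tensorμ X₁ X₂ Y₁ Y₂) :=
  ⟨tensorδ X₁ X₂ Y₁ Y₂, tensorμ_tensorδ _ _ _ _, tensorδ_tensorμ _ _ _ _⟩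

theorem subunitMul_idem_aux {S T : C} (s : S ⟶ 𝟙_ C) (t : T ⟶ 𝟙_ C)
    (hs : IsIso (s ⊗ₘ 𝟙 S)) (ht : IsIso (t ⊗ₘ 𝟙 T)) :
    IsIso (subunitMul s t ⊗ₘ 𝟙 (S ⊗ T)) := by
  have key : ((s ⊗ₘ t) ⊗ₘ (𝟙 S ⊗ₘ 𝟙 T)) ≫ tensorμ (𝟙_ C) (𝟙_ C) S T =
      tensorμ S T S T ≫ ((s ⊗ₘ 𝟙 S) ⊗ₘ (t ⊗ₘ 𝟙 T)) := tensorμ_natural s t (𝟙 S) (𝟙 T)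
  have h1 : IsIso (((s ⊗ₘ t) ⊗ₘ (𝟙 S ⊗ₘ 𝟙 T)) ≫ tensorμ (𝟙_ C) (𝟙_ C) S T) := by
    rw [key]; infer_instance
  have h2 : IsIso ((s ⊗ₘ t) ⊗ₘ (𝟙 S ⊗ₘ 𝟙 T)) := IsIso.of_isIso_comp_right _ (tensorμ (𝟙_ C) (𝟙_ C) S T)
  have h3 : IsIso ((s ⊗ₘ t) ⊗ₘ 𝟙 (S ⊗ T)) := by rwa [id_tensorHom_id] at h2
  have : subunitMul s t ⊗ₘ 𝟙 (S ⊗ T) =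
      ((s ⊗ₘ t) ⊗ₘ 𝟙 (S ⊗ T)) ≫ ((λ_ (𝟙_ C)).hom ⊗ₘ 𝟙 (S ⊗ T)) := by
    rw [tensorHom_comp_tensorHom, Category.comp_id, subunitMul]
  rw [this]
  have : IsIso ((λ_ (𝟙_ C)).hom ⊗ₘ 𝟙 (S ⊗ T)) := by
    rw [tensorHom_id]; infer_instance
  infer_instance

theorem subunitMul_mono {S T : C} (firm : Firm C) (s : S ⟶ 𝟙_ C) (t : T ⟶ 𝟙_ C)
    (hs : IsIdemSubunit s) (ht : IsIdemSubunit t) : Mono (subunitMul s t) := by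
  obtain ⟨hsm, hsi⟩ := hs
  obtain ⟨htm, hti⟩ := ht
  have m1 : Mono (s ⊗ₘ 𝟙 T) := firm s t hsm htm hsi hti
  have m2 : Mono (𝟙 (𝟙_ C) ⊗ₘ t) := by
    have h : (𝟙 (𝟙_ C) ⊗ₘ t) = (λ_ T).hom ≫ t ≫ (λ_ (𝟙_ C)).inv := by
      rw [id_tensorHom, ← leftUnitor_naturality_assoc, Iso.hom_inv_id, Category.comp_id]
    rw [h]
    exact mono_comp _ _
  have : subunitMul s t = (s ⊗ₘ 𝟙 T) ≫ (𝟙 (𝟙_ C) ⊗ₘ t) ≫ (λ_ (𝟙_ C)).hom := by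
    rw [subunitMul, ← Category.assoc, tensorHom_comp_tensorHom, Category.comp_id, Category.id_comp]
  rw [this]
  exact mono_comp _ _

end Aux

/-- In a firm braided monoidal category, the idempotent subunits form an idempotent
commutative monoid under `⊗` (as subobjects of `I`), with unit `id_I`: the product of
idempotent subunits is an idempotent subunit, and up to equality of the represented
subobjects the operation is associative, commutative, unital and idempotent. -/
theorem stmt4 {C : Type*} [Category C] [MonoidalCategory C] [BraidedCategory C]
    (firm : Firm C) :
    -- closure: the product of idempotent subunits is an idempotent subunit
    (∀ {S T : C} (s : S ⟶ 𝟙_ C) (t : T ⟶ 𝟙_ C),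
      IsIdemSubunit s → IsIdemSubunit t → IsIdemSubunit (subunitMul s t)) ∧
    -- `id_I` is an idempotent subunit
    IsIdemSubunit (𝟙 (𝟙_ C)) ∧
    -- unit laws
    (∀ {S : C} (s : S ⟶ 𝟙_ C), IsIdemSubunit s →
      SameSub (subunitMul (𝟙 (𝟙_ C)) s) s ∧ SameSub (subunitMul s (𝟙 (𝟙_ C))) s) ∧
    -- associativity
    (∀ {S T U : C} (s : S ⟶ 𝟙_ C) (t : T ⟶ 𝟙_ C) (u : U ⟶ 𝟙_ C),
      IsIdemSubunit s → IsIdemSubunit t → IsIdemSubunit u →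
      SameSub (subunitMul (subunitMul s t) u) (subunitMul s (subunitMul t u))) ∧
    -- commutativity
    (∀ {S T : C} (s : S ⟶ 𝟙_ C) (t : T ⟶ 𝟙_ C),
      IsIdemSubunit s → IsIdemSubunit t → SameSub (subunitMul s t) (subunitMul t s)) ∧
    -- idempotence
    (∀ {S : C} (s : S ⟶ 𝟙_ C), IsIdemSubunit s → SameSub (subunitMul s s) s) := by
  refine ⟨?_, ?_, ?_, ?_, ?_, ?_⟩
  · -- closure
    intro S T s t hs ht
    exact ⟨subunitMul_mono firm s t hs ht, subunitMul_idem_aux s t hs.2 ht.2⟩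
  · -- unit idempotent subunit
    refine ⟨inferInstance, ?_⟩
    rw [tensorHom_id]; infer_instance
  · -- unit laws
    intro S s _
    constructor
    · refine ⟨⟨(λ_ S).hom, ?_⟩, ⟨(λ_ S).inv, ?_⟩⟩
      · rw [subunitMul, id_tensorHom, ← leftUnitor_naturality]
      · rw [subunitMul, id_tensorHom, leftUnitor_naturality, Iso.inv_hom_id_assoc]
    · refine ⟨⟨(ρ_ S).hom, ?_⟩, ⟨(ρ_ S).inv, ?_⟩⟩
      · rw [subunitMul, tensorHom_id, unitors_equal, ← rightUnitor_naturality]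
      · rw [subunitMul, tensorHom_id, unitors_equal, rightUnitor_naturality,
          Iso.inv_hom_id_assoc]
  · -- associativity
    intro S T U s t u _ _ _
    have key : subunitMul (subunitMul s t) u =
        (α_ S T U).hom ≫ subunitMul s (subunitMul t u) := by
      simp only [subunitMul]
      have l1 : ((s ⊗ₘ t) ≫ (λ_ (𝟙_ C)).hom ⊗ₘ u) =
          ((s ⊗ₘ t) ⊗ₘ u) ≫ ((λ_ (𝟙_ C)).hom ⊗ₘ 𝟙 (𝟙_ C)) := by
        rw [tensorHom_comp_tensorHom, Category.comp_id]
      have l2 : (s ⊗ₘ (t ⊗ₘ u) ≫ (λ_ (𝟙_ C)).hom) =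
          (s ⊗ₘ (t ⊗ₘ u)) ≫ (𝟙 (𝟙_ C) ⊗ₘ (λ_ (𝟙_ C)).hom) := by
        rw [tensorHom_comp_tensorHom, Category.comp_id]
      rw [l1, l2, Category.assoc, Category.assoc, ← associator_naturality_assoc]
      congr 1
      coherence
    exact ⟨⟨(α_ S T U).hom, key⟩, ⟨(α_ S T U).inv, by rw [key, Iso.inv_hom_id_assoc]⟩⟩
  · -- commutativity
    intro S T s t _ _
    have key : ∀ {X Y : C} (x : X ⟶ 𝟙_ C) (y : Y ⟶ 𝟙_ C),
        subunitMul x y = (β_ X Y).hom ≫ subunitMul y x := by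
      intro X Y x y
      rw [subunitMul, subunitMul, ← BraidedCategory.braiding_naturality_assoc]
      congr 1
      simp [← unitors_equal]
    exact ⟨⟨(β_ S T).hom, key s t⟩, ⟨(β_ T S).hom, key t s⟩⟩
  · -- idempotence
    intro S s hs
    haveI := hs.2
    refine ⟨⟨(s ⊗ₘ 𝟙 S) ≫ (λ_ S).hom, ?_⟩, ⟨(λ_ S).inv ≫ inv (s ⊗ₘ 𝟙 S), ?_⟩⟩
    all_goals
      have h4 : (s ⊗ₘ s) ≫ (λ_ (𝟙_ C)).hom = (s ⊗ₘ 𝟙 S) ≫ (λ_ S).hom ≫ s := by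
        rw [← leftUnitor_naturality, ← id_tensorHom, tensorHom_comp_tensorHom_assoc, Category.id_comp,
          Category.comp_id]
    · rw [subunitMul, h4, Category.assoc]
    · simp only [subunitMul, Category.assoc]
      rw [h4, IsIso.inv_hom_id_assoc, Iso.inv_hom_id_assoc]
end

section
/- Let E be an object and s : S ↪ I an idempotent subunit in a monoidal category. The following are equivalent: (a) id_E ⊗ s : E ⊗ S → E ⊗ I is an isomorphism; (b) there exists an isomorphism E ⊗ S ≅ E; (c) there exists an object F and an isomorphism E ≅ F ⊗ S; (d) id_E factors through ρ_E ∘ (id_E ⊗ s) : E ⊗ S → E. -/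
open CategoryTheory MonoidalCategory

section Aux

variable {C : Type*} [Category C] [MonoidalCategory C]

lemma aux_swap {S : C} (s : S ⟶ 𝟙_ C) [Mono s] (hs : IsIso (s ▷ S)) :
    IsIso (S ◁ s) := by
  have key : S ◁ s ≫ (ρ_ S).hom = s ▷ S ≫ (λ_ S).hom := by
    rw [← cancel_mono s, Category.assoc, Category.assoc, ← rightUnitor_naturality,
      ← leftUnitor_naturality, unitors_equal, ← Category.assoc, ← Category.assoc,
      whisker_exchange]
  have : S ◁ s = s ▷ S ≫ (λ_ S).hom ≫ (ρ_ S).inv := by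
    rw [← Category.assoc, ← key]; simp
  rw [this]
  infer_instance

lemma aux_tensor_left {S : C} (s : S ⟶ 𝟙_ C) (hs : IsIso (S ◁ s)) (X : C) :
    IsIso ((X ⊗ S) ◁ s) := by
  rw [tensor_whiskerLeft]
  infer_instance

end Aux

/-- Proposition: for an object `E` and idempotent subunit `s : S ↪ I`, the following are
equivalent: (a) `id_E ⊗ s` is an isomorphism; (b) `E ⊗ S ≅ E`; (c) `E ≅ F ⊗ S` for some
`F`; (d) `id_E` has support in `s`, i.e. factors through `ρ_E ∘ (id_E ⊗ s)`. -/
theorem stmt11 {C : Type*} [Category C] [MonoidalCategory C]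
    {S : C} (s : S ⟶ 𝟙_ C) [Mono s] (hs : IsIso (s ⊗ₘ 𝟙 S)) (E : C) :
    List.TFAE
      [IsIso (𝟙 E ⊗ₘ s),
       Nonempty (E ⊗ S ≅ E),
       ∃ F : C, Nonempty (E ≅ F ⊗ S),
       ∃ g : E ⟶ E ⊗ S, g ≫ (𝟙 E ⊗ₘ s) ≫ (ρ_ E).hom = 𝟙 E] := by
  rw [tensorHom_id] at hs
  have hls : IsIso (S ◁ s) := aux_swap s hs
  tfae_have 1 → 2 := by
    intro h
    exact ⟨asIso (𝟙 E ⊗ₘ s) ≪≫ ρ_ E⟩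
  tfae_have 2 → 3 := by
    rintro ⟨e⟩
    exact ⟨E, ⟨e.symm⟩⟩
  tfae_have 3 → 1 := by
    rintro ⟨F, ⟨e⟩⟩
    have hFS : IsIso ((F ⊗ S) ◁ s) := aux_tensor_left s hls F
    have : E ◁ s = e.hom ▷ S ≫ (F ⊗ S) ◁ s ≫ e.inv ▷ (𝟙_ C) := by
      rw [← Category.assoc, ← whisker_exchange, Category.assoc, ← comp_whiskerRight]
      simp
    rw [id_tensorHom, this]
    infer_instance
  tfae_have 1 → 4 := by
    intro h
    exact ⟨(ρ_ E).inv ≫ inv (𝟙 E ⊗ₘ s), by simp⟩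
  tfae_have 4 → 1 := by
    rintro ⟨g, hg⟩
    rw [id_tensorHom] at hg ⊢
    set h : E ⊗ S ⟶ E := E ◁ s ≫ (ρ_ E).hom with hh
    have hiso : IsIso (h ▷ S) := by
      rw [hh, comp_whiskerRight, whisker_assoc]
      infer_instance
    have h1 : g ▷ S ≫ h ▷ S = 𝟙 (E ⊗ S) := by
      rw [← comp_whiskerRight, hg, id_whiskerRight]
    have h2 : h ▷ S ≫ g ▷ S = 𝟙 ((E ⊗ S) ⊗ S) := by
      have : g ▷ S = inv (h ▷ S) := by
        rw [← cancel_mono (h ▷ S), h1, IsIso.inv_hom_id]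
      rw [this, IsIso.hom_inv_id]
    have hES : IsIso ((E ⊗ S) ◁ s) := aux_tensor_left s hls E
    have h3 : (h ≫ g) ▷ (𝟙_ C) = 𝟙 (E ⊗ S) ▷ (𝟙_ C) := by
      rw [← cancel_epi ((E ⊗ S) ◁ s), whisker_exchange, comp_whiskerRight,
        h2]
      simp
    have h4 : h ≫ g = 𝟙 (E ⊗ S) := by
      have h5 := congrArg (fun k => k ≫ (ρ_ (E ⊗ S)).hom) h3
      simp only [rightUnitor_naturality] at h5
      exact (cancel_epi (ρ_ (E ⊗ S)).hom).mp h5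
    have : IsIso h := ⟨g, h4, hg⟩
    have : IsIso (E ◁ s ≫ (ρ_ E).hom) := hh ▸ this
    have := IsIso.of_isIso_comp_right (E ◁ s) (ρ_ E).hom
    exact this
  tfae_finish
end
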